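/- (Convergence of the synchronous relaxed nonstationary multisplitting method.) Let A ∈ ℝ^{n×n} be an H₊-matrix, let D be its diagonal part and B = D − A, and set γ = ρ(D⁻¹B). Let ω ∈ (0, 2/(1+γ)). For i = 1, …, m, let A = M_i − N_i be splittings with ⟨A⟩ ≤ ⟨M_i⟩ − |N_i| entrywise, and let E₁, …, E_m be nonnegative diagonal matrices with Σ_{i=1}^m E_i = I. Let η = γ / (Σ_{i=1}^m ‖E_i‖), and suppose s̃ is a positive integer such that ‖(⟨M_i⟩⁻¹|N_i|)^s‖ ≤ η for all s ≥ s̃ and all i = 1, …, m, where ‖·‖ is the matrix ∞-norm. Let x* ∈ ℝⁿ be a solution of LCP(A, f). Let integers s(k,i) ≥ s̃ be given for all k ≥ 1 and i = 1, …, m, and define the sequence {x^k} by: given x^k, for each i set y^{0,i} = x^k and for j = 1, …, s(k,i) let y^{j,i} solve LCP(M_i, f + N_i y^{j−1,i}); then x^{k+1} = ω Σ_{i=1}^m E_i y^{s(k,i),i} + (1−ω) x^k. Then x^k converges to x* as k → ∞. -/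

import Mathlib

open Matrix Filter

noncomputable section

/-- Comparison matrix `⟨A⟩`: `α_ii = |a_ii|`, `α_ij = -|a_ij|` for `i ≠ j`. -/
def cmpMat {n : ℕ} (A : Matrix (Fin n) (Fin n) ℝ) : Matrix (Fin n) (Fin n) ℝ :=
  Matrix.of fun i j => if i = j then |A i j| else -|A i j|

/-- Entrywise absolute value of a matrix. -/
def absMat {n : ℕ} (A : Matrix (Fin n) (Fin n) ℝ) : Matrix (Fin n) (Fin n) ℝ :=
  Matrix.of fun i j => |A i j|

/-- `A` is an M-matrix: nonpositive off-diagonal entries, nonsingular,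
and entrywise nonnegative inverse. -/
def IsMMat {n : ℕ} (A : Matrix (Fin n) (Fin n) ℝ) : Prop :=
  (∀ i j, i ≠ j → A i j ≤ 0) ∧ IsUnit A.det ∧ ∀ i j, 0 ≤ A⁻¹ i j

/-- `A` is an H-matrix: its comparison matrix is an M-matrix. -/
def IsHMat {n : ℕ} (A : Matrix (Fin n) (Fin n) ℝ) : Prop := IsMMat (cmpMat A)

/-- `A` is an H₊-matrix: an H-matrix with positive diagonal entries. -/
def IsHpMat {n : ℕ} (A : Matrix (Fin n) (Fin n) ℝ) : Prop :=
  IsHMat A ∧ ∀ i, 0 < A i i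

/-- Spectral radius of a real matrix: supremum of moduli of its complex eigenvalues. -/
def specRad {n : ℕ} (A : Matrix (Fin n) (Fin n) ℝ) : ℝ :=
  sSup {r : ℝ | ∃ μ : ℂ, μ ∈ spectrum ℂ (A.map Complex.ofReal) ∧ r = ‖μ‖}

/-- Matrix ∞-norm: maximum absolute row sum. -/
def infNorm {n : ℕ} (A : Matrix (Fin n) (Fin n) ℝ) : ℝ :=
  ⨆ i, ∑ j, |A i j|

/-- `x` solves the linear complementarity problem LCP(A, f):
`x ≥ 0`, `Ax - f ≥ 0`, `xᵀ(Ax - f) = 0`. -/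
def SolvesLCP {n : ℕ} (A : Matrix (Fin n) (Fin n) ℝ) (f x : Fin n → ℝ) : Prop :=
  (∀ j, 0 ≤ x j) ∧ (∀ j, f j ≤ (A *ᵥ x) j) ∧ ∑ j, x j * ((A *ᵥ x) j - f j) = 0

end

variable {n : ℕ}



lemma mulVec_mono {P : Matrix (Fin n) (Fin n) ℝ} (hP : ∀ p q, 0 ≤ P p q)
    {u v : Fin n → ℝ} (h : ∀ q, u q ≤ v q) : ∀ p, (P *ᵥ u) p ≤ (P *ᵥ v) p := by
  intro p
  simp only [Matrix.mulVec, dotProduct]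
  exact Finset.sum_le_sum fun q _ => mul_le_mul_of_nonneg_left (h q) (hP p q)

lemma mulVec_nonneg {P : Matrix (Fin n) (Fin n) ℝ} (hP : ∀ p q, 0 ≤ P p q)
    {u : Fin n → ℝ} (h : ∀ q, 0 ≤ u q) : ∀ p, 0 ≤ (P *ᵥ u) p := by
  intro p
  simpa using mulVec_mono hP (u := 0) (v := u) h p

lemma pow_entries_nonneg {P : Matrix (Fin n) (Fin n) ℝ} (hP : ∀ p q, 0 ≤ P p q)
    (K : ℕ) : ∀ p q, 0 ≤ (P ^ K) p q := by
  induction K with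
  | zero => intro p q; simp [Matrix.one_apply]; positivity
  | succ K ih =>
      intro p q
      rw [pow_succ, Matrix.mul_apply]
      exact Finset.sum_le_sum (fun r _ => mul_nonneg (ih p r) (hP r q)) |>.trans_eq' (by simp)

/-- key comparison: row-max argument. -/
lemma eig_bound (hn : 0 < n) {P : Matrix (Fin n) (Fin n) ℝ} (hP : ∀ p q, 0 ≤ P p q)
    {w : Fin n → ℝ} (hw : ∀ p, 0 < w p) {θ : ℝ}
    (hPw : ∀ p, (P *ᵥ w) p ≤ θ * w p)
    {c : Fin n → ℝ} (hc : ∀ p, 0 ≤ c p) {r : ℝ}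
    (hrc : ∀ p, r * c p ≤ (P *ᵥ c) p)
    (hne : ∃ p, 0 < c p) : r ≤ θ := by
  haveI : Nonempty (Fin n) := Fin.pos_iff_nonempty.mp hn
  obtain ⟨p, -, hp⟩ := Finset.exists_max_image Finset.univ (fun p => c p / w p)
    ⟨Classical.arbitrary _, Finset.mem_univ _⟩
  set t := c p / w p with ht
  obtain ⟨q0, hq0⟩ := hne
  have ht0 : 0 < t := lt_of_lt_of_le (div_pos hq0 (hw q0)) (hp q0 (Finset.mem_univ _))
  have hcw : ∀ q, c q ≤ t * w q := fun q => by
    have := hp q (Finset.mem_univ _)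
    calc c q = c q / w q * w q := (div_mul_cancel₀ _ (hw q).ne').symm
    _ ≤ t * w q := mul_le_mul_of_nonneg_right this (hw q).le
  have hcp : c p = t * w p := by rw [ht, div_mul_cancel₀ _ (hw p).ne']
  have h1 : r * c p ≤ (P *ᵥ c) p := hrc p
  have h2 : (P *ᵥ c) p ≤ t * (P *ᵥ w) p := by
    simp only [Matrix.mulVec, dotProduct, Finset.mul_sum]
    refine Finset.sum_le_sum fun q _ => ?_
    calc P p q * c q ≤ P p q * (t * w q) := mul_le_mul_of_nonneg_left (hcw q) (hP p q)
    _ = t * (P p q * w q) := by ring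
  have h3 : t * (P *ᵥ w) p ≤ t * (θ * w p) := mul_le_mul_of_nonneg_left (hPw p) ht0.le
  have h4 : r * (t * w p) ≤ θ * (t * w p) := by
    have h5 := h1.trans (h2.trans h3)
    rw [hcp] at h5
    linarith
  have hpos : 0 < t * w p := mul_pos ht0 (hw p)
  exact le_of_mul_le_mul_right (by simpa [mul_comm] using h4) hpos



lemma mulVec_mono' {P : Matrix (Fin n) (Fin n) ℝ} (hP : ∀ p q, 0 ≤ P p q)
    {u v : Fin n → ℝ} (h : ∀ q, u q ≤ v q) : ∀ p, (P *ᵥ u) p ≤ (P *ᵥ v) p := by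
  intro p
  simp only [Matrix.mulVec, dotProduct]
  exact Finset.sum_le_sum fun q _ => mul_le_mul_of_nonneg_left (h q) (hP p q)

lemma pow_entries_nonneg' {P : Matrix (Fin n) (Fin n) ℝ} (hP : ∀ p q, 0 ≤ P p q)
    (K : ℕ) : ∀ p q, 0 ≤ (P ^ K) p q := by
  induction K with
  | zero => intro p q; simp [Matrix.one_apply]; positivity
  | succ K ih =>
      intro p q
      rw [pow_succ, Matrix.mul_apply]
      exact Finset.sum_nonneg fun r _ => mul_nonneg (ih p r) (hP r q)

/-- M-matrix criterion: nonpositive off-diagonal + positive vector with positive image. -/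
lemma mmat_criterion (hn : 0 < n) {B : Matrix (Fin n) (Fin n) ℝ}
    (hoff : ∀ p q, p ≠ q → B p q ≤ 0)
    {w : Fin n → ℝ} (hw : ∀ p, 0 < w p) (hBw : ∀ p, 0 < (B *ᵥ w) p)
    (eig_bound : ∀ {P : Matrix (Fin n) (Fin n) ℝ}, (∀ p q, 0 ≤ P p q) →
      ∀ {θ : ℝ}, (∀ p, (P *ᵥ w) p ≤ θ * w p) →
      ∀ {c : Fin n → ℝ}, (∀ p, 0 ≤ c p) → ∀ {r : ℝ},
      (∀ p, r * c p ≤ (P *ᵥ c) p) → (∃ p, 0 < c p) → r ≤ θ) :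
    IsUnit B.det ∧ ∀ p q, 0 ≤ B⁻¹ p q := by
  haveI : Nonempty (Fin n) := Fin.pos_iff_nonempty.mp hn
  have hrow : ∀ p, ∑ q ∈ Finset.univ.erase p, B p q * w q ≤ 0 := fun p =>
    Finset.sum_nonpos fun q hq =>
      mul_nonpos_of_nonpos_of_nonneg (hoff p q (Finset.ne_of_mem_erase hq).symm) (hw q).le
  have hBsplit : ∀ p, (B *ᵥ w) p = B p p * w p + ∑ q ∈ Finset.univ.erase p, B p q * w q := by
    intro p
    rw [Matrix.mulVec, dotProduct, ← Finset.add_sum_erase _ _ (Finset.mem_univ p)]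
  have hdiag : ∀ p, 0 < B p p := by
    intro p
    have h1 := hBw p
    rw [hBsplit p] at h1
    have h2 : 0 < B p p * w p := by linarith [hrow p]
    by_contra h
    push_neg at h
    nlinarith [hw p]
  -- the iteration matrix
  set P : Matrix (Fin n) (Fin n) ℝ :=
    Matrix.of (fun p q => if p = q then 0 else -B p q / B p p) with hPdef
  have hP : ∀ p q, 0 ≤ P p q := by
    intro p q
    by_cases h : p = q
    · simp [hPdef, h]
    · simp only [hPdef, Matrix.of_apply, if_neg h]
      exact div_nonneg (neg_nonneg.mpr (hoff p q h)) (hdiag p).le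
  -- P *ᵥ w computed
  have hPwval : ∀ p, (P *ᵥ w) p = w p - (B *ᵥ w) p / B p p := by
    intro p
    have : (P *ᵥ w) p = ∑ q, (if p = q then 0 else -B p q / B p p) * w q := rfl
    rw [this]
    have hw' : w p - (B *ᵥ w) p / B p p
        = ∑ q, ((if p = q then w q else 0) - B p q * w q / B p p) := by
      rw [Finset.sum_sub_distrib, Finset.sum_ite_eq Finset.univ p w, if_pos (Finset.mem_univ p)]
      congr 1
      rw [Matrix.mulVec, dotProduct, Finset.sum_div]
    rw [hw']
    refine Finset.sum_congr rfl fun q _ => ?_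
    have hne := (hdiag p).ne'
    by_cases h : p = q
    · subst h
      rw [if_pos rfl, if_pos rfl, zero_mul]
      field_simp
      ring
    · rw [if_neg h, if_neg h]
      ring
  -- θ
  set θ : ℝ := Finset.univ.sup' Finset.univ_nonempty (fun p => 1 - (B *ᵥ w) p / (B p p * w p))
    with hθdef
  have hθ1 : θ < 1 := by
    rw [hθdef, Finset.sup'_lt_iff]
    intro p _
    have : 0 < (B *ᵥ w) p / (B p p * w p) := div_pos (hBw p) (mul_pos (hdiag p) (hw p))
    linarith
  have hθ0 : 0 ≤ θ := by
    obtain ⟨p⟩ := ‹Nonempty (Fin n)›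
    refine le_trans ?_
      (Finset.le_sup' (fun p => 1 - (B *ᵥ w) p / (B p p * w p)) (Finset.mem_univ p))
    have h1 : (B *ᵥ w) p ≤ B p p * w p := by rw [hBsplit p]; linarith [hrow p]
    have := div_le_one_of_le₀ h1 (mul_pos (hdiag p) (hw p)).le
    linarith
  have hPw : ∀ p, (P *ᵥ w) p ≤ θ * w p := by
    intro p
    rw [hPwval p]
    have h1 : 1 - (B *ᵥ w) p / (B p p * w p) ≤ θ :=
      Finset.le_sup' (fun p => 1 - (B *ᵥ w) p / (B p p * w p)) (Finset.mem_univ p)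
    have hpos : 0 < B p p * w p := mul_pos (hdiag p) (hw p)
    have h2 : (B *ᵥ w) p / B p p = ((B *ᵥ w) p / (B p p * w p)) * w p := by
      field_simp
      rw [mul_div_mul_right _ _ (hw p).ne']
    rw [h2]
    nlinarith [hw p]
  -- factorization B = D (1 - P)
  have hfact : B = Matrix.diagonal (fun p => B p p) * (1 - P) := by
    ext p q
    rw [Matrix.diagonal_mul]
    by_cases h : p = q
    · subst h; simp [hPdef, Matrix.sub_apply, Matrix.one_apply]
    · have hne := (hdiag p).ne'
      simp only [Matrix.sub_apply, Matrix.one_apply, if_neg h, hPdef, Matrix.of_apply]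
      field_simp
      ring
  -- (1 - P) is injective
  have hker : ∀ v : Fin n → ℝ, (1 - P) *ᵥ v = 0 → v = 0 := by
    intro v hv
    by_contra hvne
    have hPv : ∀ p, v p = (P *ᵥ v) p := by
      intro p
      have := congrFun hv p
      rw [Matrix.sub_mulVec, Pi.sub_apply, Matrix.one_mulVec] at this
      have : v p - (P *ᵥ v) p = 0 := this
      linarith
    have habs : ∀ p, 1 * |v p| ≤ (P *ᵥ (fun q => |v q|)) p := by
      intro p
      rw [one_mul, hPv p]
      calc |(P *ᵥ v) p| ≤ ∑ q, P p q * |v q| := by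
            rw [Matrix.mulVec, dotProduct]
            refine (Finset.abs_sum_le_sum_abs _ _).trans ?_
            refine Finset.sum_le_sum fun q _ => ?_
            rw [abs_mul, abs_of_nonneg (hP p q)]
        _ = (P *ᵥ (fun q => |v q|)) p := rfl
    obtain ⟨p0, hp0⟩ := Function.ne_iff.mp hvne
    have h1θ : (1 : ℝ) ≤ θ :=
      eig_bound hP hPw (fun p => abs_nonneg _) habs ⟨p0, abs_pos.mpr hp0⟩
    linarith
  have hdet1P : (1 - P).det ≠ 0 := by
    intro h
    obtain ⟨v, hvne, hv⟩ := (Matrix.exists_mulVec_eq_zero_iff).mpr h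
    exact hvne (hker v hv)
  have hu1P : IsUnit (1 - P).det := isUnit_iff_ne_zero.mpr hdet1P
  set Q : Matrix (Fin n) (Fin n) ℝ := (1 - P)⁻¹ with hQdef
  -- geometric sum identity
  have hgeom : ∀ K : ℕ, (∑ k ∈ Finset.range K, P ^ k) = Q - P ^ K * Q := by
    intro K
    have hgs : (∑ k ∈ Finset.range K, P ^ k) * (1 - P) = 1 - P ^ K := by
      have h := geom_sum_mul P K
      have h2 : (∑ k ∈ Finset.range K, P ^ k) * (1 - P)
          = -((∑ k ∈ Finset.range K, P ^ k) * (P - 1)) := by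
        simp only [mul_sub, mul_one, neg_sub]
      rw [h2, h, neg_sub]
    have h2 : (1 - P) * Q = 1 := Matrix.mul_nonsing_inv _ hu1P
    calc (∑ k ∈ Finset.range K, P ^ k)
        = (∑ k ∈ Finset.range K, P ^ k) * ((1 - P) * Q) := by rw [h2, mul_one]
      _ = ((∑ k ∈ Finset.range K, P ^ k) * (1 - P)) * Q := (mul_assoc _ _ _).symm
      _ = (1 - P ^ K) * Q := by rw [hgs]
      _ = Q - P ^ K * Q := by rw [sub_mul, one_mul]
  -- power bounds
  have hPowW : ∀ K p, ((P ^ K) *ᵥ w) p ≤ θ ^ K * w p := by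
    intro K
    induction K with
    | zero => intro p; simp [Matrix.one_mulVec]
    | succ K ih =>
        intro p
        rw [pow_succ, ← Matrix.mulVec_mulVec]
        calc ((P ^ K) *ᵥ (P *ᵥ w)) p ≤ ((P ^ K) *ᵥ (fun q => θ * w q)) p :=
              mulVec_mono' (pow_entries_nonneg' hP K) hPw p
          _ = θ * (((P ^ K) *ᵥ w) p) := by
              simp only [Matrix.mulVec, dotProduct, Finset.mul_sum]
              exact Finset.sum_congr rfl fun q _ => by ring
          _ ≤ θ * (θ ^ K * w p) := mul_le_mul_of_nonneg_left (ih p) hθ0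
          _ = θ ^ (K + 1) * w p := by ring
  have hPK : ∀ K p q, (P ^ K) p q ≤ θ ^ K * w p / w q := by
    intro K p q
    have h1 : (P ^ K) p q * w q ≤ ((P ^ K) *ᵥ w) p := by
      rw [Matrix.mulVec, dotProduct]
      exact Finset.single_le_sum
        (fun r _ => mul_nonneg (pow_entries_nonneg' hP K p r) (hw r).le) (Finset.mem_univ q)
    have h2 := h1.trans (hPowW K p)
    rw [le_div_iff₀ (hw q)]
    exact h2
  -- Q nonneg
  have hQ : ∀ p q, 0 ≤ Q p q := by
    intro p q
    set C : ℝ := ∑ r, (w p / w r) * |Q r q| with hCdef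
    have hC : 0 ≤ C := Finset.sum_nonneg fun r _ =>
      mul_nonneg (div_nonneg (hw p).le (hw r).le) (abs_nonneg _)
    have hlow : ∀ K : ℕ, -(θ ^ K * C) ≤ Q p q := by
      intro K
      have hid := congrFun (congrFun (hgeom K) p) q
      rw [Matrix.sub_apply] at hid
      have hS : 0 ≤ (∑ k ∈ Finset.range K, P ^ k) p q := by
        rw [Matrix.sum_apply]
        exact Finset.sum_nonneg fun k _ => pow_entries_nonneg' hP k p q
      have h6 : ∑ r, -((θ ^ K * (w p / w r)) * |Q r q|) = -(θ ^ K * C) := by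
        rw [hCdef, Finset.mul_sum, ← Finset.sum_neg_distrib]
        exact Finset.sum_congr rfl fun r _ => by ring
      have hPQ : (P ^ K * Q) p q ≥ -(θ ^ K * C) := by
        rw [Matrix.mul_apply]
        have h7 : ∑ r, (P ^ K) p r * Q r q ≥ ∑ r, -((θ ^ K * (w p / w r)) * |Q r q|) := by
          refine Finset.sum_le_sum fun r _ => ?_
          have h3 : (P ^ K) p r * |Q r q| ≤ (θ ^ K * w p / w r) * |Q r q| :=
            mul_le_mul_of_nonneg_right (hPK K p r) (abs_nonneg _)
          have h4 : -((P ^ K) p r * |Q r q|) ≤ (P ^ K) p r * Q r q := by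
            have := neg_abs_le (Q r q)
            nlinarith [pow_entries_nonneg' hP K p r, abs_nonneg (Q r q)]
          have h5 : (θ ^ K * (w p / w r)) * |Q r q| = (θ ^ K * w p / w r) * |Q r q| := by
            ring
          linarith
        rw [← h6]
        exact h7
      linarith
    have hlim : Tendsto (fun K : ℕ => -(θ ^ K * C)) atTop (nhds 0) := by
      have := (tendsto_pow_atTop_nhds_zero_of_lt_one hθ0 hθ1).mul_const C
      simpa using this.neg
    exact le_of_tendsto' hlim hlow
  -- conclude
  have hdetB : B.det = (∏ p, B p p) * (1 - P).det := by
    conv_lhs => rw [hfact]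
    rw [Matrix.det_mul, Matrix.det_diagonal]
  have hprod : (∏ p, B p p) ≠ 0 := Finset.prod_ne_zero_iff.mpr fun p _ => (hdiag p).ne'
  have huB : IsUnit B.det := isUnit_iff_ne_zero.mpr (by rw [hdetB]; exact mul_ne_zero hprod hdet1P)
  refine ⟨huB, ?_⟩
  have hdinv : (Matrix.diagonal (fun p => B p p))⁻¹
      = Matrix.diagonal (fun p => (B p p)⁻¹) := by
    apply Matrix.inv_eq_right_inv
    rw [Matrix.diagonal_mul_diagonal]
    convert Matrix.diagonal_one with p
    exact mul_inv_cancel₀ (hdiag p).ne'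
  have hBinv : B⁻¹ = Q * Matrix.diagonal (fun p => (B p p)⁻¹) := by
    conv_lhs => rw [hfact]
    rw [Matrix.mul_inv_rev, hdinv]
  intro p q
  rw [hBinv, Matrix.mul_diagonal]
  exact mul_nonneg (hQ p q) (inv_nonneg.mpr (hdiag q).le)




/-- complementarity holds componentwise -/
lemma lcp_comp {M : Matrix (Fin n) (Fin n) ℝ} {f u : Fin n → ℝ}
    (hu : SolvesLCP M f u) : ∀ p, 0 < u p → (M *ᵥ u) p = f p := by
  obtain ⟨h0, h1, h2⟩ := hu
  intro p hp
  have hnn : ∀ q ∈ Finset.univ, 0 ≤ u q * ((M *ᵥ u) q - f q) := fun q _ =>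
    mul_nonneg (h0 q) (sub_nonneg.mpr (h1 q))
  have := (Finset.sum_eq_zero_iff_of_nonneg hnn).mp h2 p (Finset.mem_univ p)
  have h3 := mul_eq_zero.mp this
  rcases h3 with h3 | h3
  · exact absurd h3 hp.ne'
  · linarith [sub_eq_zero.mp h3]

/-- One-sided key inequality used in the LCP comparison lemma. -/
lemma lcp_key {M : Matrix (Fin n) (Fin n) ℝ} {f g u v : Fin n → ℝ}
    (hu : SolvesLCP M f u) (hv : SolvesLCP M g v) {p : Fin n} (hp : v p < u p) :
    M p p * (u p - v p) ≤ |f p - g p| + ∑ q ∈ Finset.univ.erase p, |M p q| * |u q - v q| := by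
  have hup : 0 < u p := lt_of_le_of_lt (hv.1 p) hp
  have h1 : (M *ᵥ u) p = f p := lcp_comp hu p hup
  have h2 : g p ≤ (M *ᵥ v) p := hv.2.1 p
  have h3 : (M *ᵥ u) p - (M *ᵥ v) p ≤ f p - g p := by linarith
  have h4 : (M *ᵥ u) p - (M *ᵥ v) p = ∑ q, M p q * (u q - v q) := by
    simp only [Matrix.mulVec, dotProduct, ← Finset.sum_sub_distrib]
    exact Finset.sum_congr rfl fun q _ => by ring
  have h5 : ∑ q, M p q * (u q - v q)
      = M p p * (u p - v p) + ∑ q ∈ Finset.univ.erase p, M p q * (u q - v q) :=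
    (Finset.add_sum_erase _ _ (Finset.mem_univ p)).symm
  have h6 : ∀ q ∈ Finset.univ.erase p, -(|M p q| * |u q - v q|) ≤ M p q * (u q - v q) := by
    intro q _
    calc -(|M p q| * |u q - v q|) = -|M p q * (u q - v q)| := by rw [abs_mul]
      _ ≤ M p q * (u q - v q) := neg_abs_le _
  have h7 : -(∑ q ∈ Finset.univ.erase p, |M p q| * |u q - v q|)
      ≤ ∑ q ∈ Finset.univ.erase p, M p q * (u q - v q) := by
    rw [← Finset.sum_neg_distrib]
    exact Finset.sum_le_sum h6
  have h8 : f p - g p ≤ |f p - g p| := le_abs_self _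
  rw [h4, h5] at h3
  linarith

/-- LCP comparison lemma: `⟨M⟩ |u - v| ≤ |f - g|` entrywise. -/
lemma lcp_compare {M : Matrix (Fin n) (Fin n) ℝ} (hdiag : ∀ p, 0 < M p p)
    {f g u v : Fin n → ℝ} (hu : SolvesLCP M f u) (hv : SolvesLCP M g v) :
    ∀ p, (cmpMat M *ᵥ fun q => |u q - v q|) p ≤ |f p - g p| := by
  intro p
  have hsplit : (cmpMat M *ᵥ fun q => |u q - v q|) p
      = |M p p| * |u p - v p| + ∑ q ∈ Finset.univ.erase p, -|M p q| * |u q - v q| := by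
    rw [Matrix.mulVec, dotProduct, ← Finset.add_sum_erase _ _ (Finset.mem_univ p)]
    congr 1
    · simp [cmpMat]
    · refine Finset.sum_congr rfl fun q hq => ?_
      have : p ≠ q := fun h => (Finset.ne_of_mem_erase hq) h.symm
      simp [cmpMat, this]
  have hsum : ∑ q ∈ Finset.univ.erase p, -|M p q| * |u q - v q|
      = -(∑ q ∈ Finset.univ.erase p, |M p q| * |u q - v q|) := by
    rw [← Finset.sum_neg_distrib]
    exact Finset.sum_congr rfl fun q _ => by ring
  rw [hsplit, hsum, abs_of_pos (hdiag p)]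
  rcases lt_trichotomy (v p) (u p) with h | h | h
  · have := lcp_key hu hv h
    rw [abs_of_pos (sub_pos.mpr h)]
    linarith
  · rw [h, sub_self, abs_zero, mul_zero]
    have : 0 ≤ ∑ q ∈ Finset.univ.erase p, |M p q| * |u q - v q| :=
      Finset.sum_nonneg fun q _ => mul_nonneg (abs_nonneg _) (abs_nonneg _)
    have := abs_nonneg (f p - g p)
    linarith
  · have h9 := lcp_key hv hu h
    rw [abs_of_neg (sub_neg.mpr h)]
    have : |g p - f p| = |f p - g p| := abs_sub_comm _ _
    have h10 : ∀ q, |v q - u q| = |u q - v q| := fun q => abs_sub_comm _ _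
    simp only [h10] at h9
    linarith


/-- positive vector from an M-matrix -/
lemma mmat_vec (hn : 0 < n) {B : Matrix (Fin n) (Fin n) ℝ} (hB : IsUnit B.det)
    (hBinv : ∀ p q, 0 ≤ B⁻¹ p q) :
    ∃ w : Fin n → ℝ, (∀ p, 0 < w p) ∧ B *ᵥ w = fun _ => 1 := by
  refine ⟨B⁻¹ *ᵥ (fun _ => 1), ?_, ?_⟩
  · intro p
    have hnn : ∀ q ∈ Finset.univ, 0 ≤ B⁻¹ p q * 1 := fun q _ => by
      simpa using hBinv p q
    have hval : (B⁻¹ *ᵥ (fun _ => (1:ℝ))) p = ∑ q, B⁻¹ p q * 1 := rfl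
    rcases lt_or_eq_of_le (Finset.sum_nonneg hnn) with h | h
    · rw [hval]; exact h
    · exfalso
      have hz : ∀ q ∈ Finset.univ, B⁻¹ p q * 1 = 0 :=
        (Finset.sum_eq_zero_iff_of_nonneg hnn).mp h.symm
      have h1 : (B⁻¹ * B) p p = 0 := by
        rw [Matrix.mul_apply]
        refine Finset.sum_eq_zero fun q _ => ?_
        have := hz q (Finset.mem_univ q)
        rw [mul_one] at this
        rw [this, zero_mul]
      rw [Matrix.nonsing_inv_mul B hB] at h1
      simp [Matrix.one_apply] at h1
  · rw [Matrix.mulVec_mulVec, Matrix.mul_nonsing_inv B hB, Matrix.one_mulVec]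

/-- The Jacobi iteration matrix entries bound, eigenvalue estimate:
the spectral radius of the Jacobi matrix of an H₊-matrix is < 1. -/
lemma specRad_jacobi_lt_one (hn : 0 < n) {A : Matrix (Fin n) (Fin n) ℝ}
    (hA : IsHpMat A) :
    specRad ((Matrix.diagonal fun p => A p p)⁻¹ *
      (Matrix.diagonal (fun p => A p p) - A)) < 1 := by
  haveI : Nonempty (Fin n) := Fin.pos_iff_nonempty.mp hn
  obtain ⟨⟨hoffA, huA, hinvA⟩, hdA⟩ := hA
  obtain ⟨w, hw, hBw⟩ := mmat_vec hn huA hinvA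
  -- the absolute Jacobi matrix
  set P : Matrix (Fin n) (Fin n) ℝ :=
    Matrix.of (fun p q => if p = q then 0 else |A p q| / A p p) with hPdef
  have hP : ∀ p q, 0 ≤ P p q := by
    intro p q
    by_cases h : p = q
    · simp [hPdef, h]
    · simp only [hPdef, Matrix.of_apply, if_neg h]
      exact div_nonneg (abs_nonneg _) (hdA p).le
  have hcmpd : ∀ p, cmpMat A p p = A p p := fun p => by
    simp [cmpMat, abs_of_pos (hdA p)]
  have hcmpo : ∀ p q, p ≠ q → cmpMat A p q = -|A p q| := fun p q h => by
    simp [cmpMat, h]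
  have hBw1 : ∀ p, (cmpMat A *ᵥ w) p = 1 := fun p => congrFun hBw p
  have hsplit : ∀ p, (cmpMat A *ᵥ w) p
      = A p p * w p - ∑ q ∈ Finset.univ.erase p, |A p q| * w q := by
    intro p
    rw [Matrix.mulVec, dotProduct, ← Finset.add_sum_erase _ _ (Finset.mem_univ p)]
    rw [hcmpd p, sub_eq_add_neg, ← Finset.sum_neg_distrib]
    congr 1
    refine Finset.sum_congr rfl fun q hq => ?_
    rw [hcmpo p q (fun h => (Finset.ne_of_mem_erase hq) h.symm)]
    ring
  have hPwval : ∀ p, (P *ᵥ w) p = w p - 1 / A p p := by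
    intro p
    have h0 : (P *ᵥ w) p = ∑ q, (if p = q then 0 else |A p q| / A p p) * w q := rfl
    have h1 : (P *ᵥ w) p = ∑ q ∈ Finset.univ.erase p, |A p q| / A p p * w q := by
      rw [h0, ← Finset.add_sum_erase _ _ (Finset.mem_univ p), if_pos rfl, zero_mul, zero_add]
      exact Finset.sum_congr rfl fun q hq => by
        rw [if_neg (fun h => (Finset.ne_of_mem_erase hq) h.symm)]
    have h2 : ∑ q ∈ Finset.univ.erase p, |A p q| * w q = A p p * w p - 1 := by
      have := hBw1 p
      rw [hsplit p] at this
      linarith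
    have h3 : ∑ q ∈ Finset.univ.erase p, |A p q| / A p p * w q
        = (∑ q ∈ Finset.univ.erase p, |A p q| * w q) / A p p := by
      rw [Finset.sum_div]
      exact Finset.sum_congr rfl fun q _ => by ring
    rw [h1, h3, h2, sub_div, mul_comm, mul_div_assoc, div_self (hdA p).ne', mul_one]
  set θ : ℝ := Finset.univ.sup' Finset.univ_nonempty (fun p => 1 - 1 / (A p p * w p))
    with hθdef
  have hθ1 : θ < 1 := by
    rw [hθdef, Finset.sup'_lt_iff]
    intro p _
    have : 0 < 1 / (A p p * w p) := one_div_pos.mpr (mul_pos (hdA p) (hw p))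
    linarith
  have hθ0 : 0 ≤ θ := by
    obtain ⟨p⟩ := ‹Nonempty (Fin n)›
    refine le_trans ?_ (Finset.le_sup' (fun p => 1 - 1 / (A p p * w p)) (Finset.mem_univ p))
    have h1 : 0 ≤ (P *ᵥ w) p := by
      rw [Matrix.mulVec, dotProduct]
      exact Finset.sum_nonneg fun q _ => mul_nonneg (hP p q) (hw q).le
    rw [hPwval p] at h1
    have h2 : 1 / A p p ≤ w p := by linarith
    have h3 : 1 / (A p p * w p) ≤ 1 := by
      rw [div_le_one (mul_pos (hdA p) (hw p))]
      have h4 : A p p * (1 / A p p) = 1 := by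
        rw [mul_one_div, div_self (hdA p).ne']
      nlinarith [mul_le_mul_of_nonneg_left h2 (hdA p).le]
    linarith
  have hPw : ∀ p, (P *ᵥ w) p ≤ θ * w p := by
    intro p
    rw [hPwval p]
    have h1 : 1 - 1 / (A p p * w p) ≤ θ :=
      Finset.le_sup' (fun p => 1 - 1 / (A p p * w p)) (Finset.mem_univ p)
    have h2 : 1 / A p p = (1 / (A p p * w p)) * w p := by
      rw [one_div, one_div, mul_inv, mul_assoc, inv_mul_cancel₀ (hw p).ne', mul_one]
    rw [h2]
    nlinarith [hw p]
  -- entries of the Jacobi matrix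
  set J : Matrix (Fin n) (Fin n) ℝ := (Matrix.diagonal fun p => A p p)⁻¹ *
      (Matrix.diagonal (fun p => A p p) - A) with hJdef
  have hdinv : (Matrix.diagonal (fun p => A p p))⁻¹
      = Matrix.diagonal (fun p => (A p p)⁻¹) := by
    apply Matrix.inv_eq_right_inv
    rw [Matrix.diagonal_mul_diagonal]
    have hone : (fun p => A p p * (A p p)⁻¹) = fun _ => (1:ℝ) :=
      funext fun p => mul_inv_cancel₀ (hdA p).ne'
    rw [hone, Matrix.diagonal_one]
  have hJabs : ∀ p q, |J p q| = P p q := by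
    intro p q
    rw [hJdef, hdinv, Matrix.diagonal_mul]
    by_cases h : p = q
    · subst h
      simp [hPdef, Matrix.sub_apply, Matrix.diagonal_apply_eq]
    · rw [Matrix.sub_apply, Matrix.diagonal_apply_ne _ h]
      simp only [hPdef, Matrix.of_apply, if_neg h]
      rw [zero_sub, mul_neg, abs_neg, abs_mul, abs_of_nonneg (inv_nonneg.mpr (hdA p).le)]
      rw [inv_mul_eq_div, div_eq_div_iff (hdA p).ne' (hdA p).ne']
  -- spectral radius bound
  refine lt_of_le_of_lt (Real.sSup_le ?_ hθ0) hθ1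
  rintro r ⟨μ, hμ, rfl⟩
  rw [spectrum.mem_iff] at hμ
  have hdet : (algebraMap ℂ (Matrix (Fin n) (Fin n) ℂ) μ - J.map Complex.ofReal).det = 0 := by
    by_contra h
    exact hμ ((Matrix.isUnit_iff_isUnit_det _).mpr (isUnit_iff_ne_zero.mpr h))
  obtain ⟨v, hvne, hv⟩ := (Matrix.exists_mulVec_eq_zero_iff).mpr hdet
  have heig : ∀ p, (J.map Complex.ofReal *ᵥ v) p = μ * v p := by
    intro p
    have h1 := congrFun hv p
    rw [Matrix.sub_mulVec] at h1
    have h2 : (algebraMap ℂ (Matrix (Fin n) (Fin n) ℂ) μ) *ᵥ v = μ • v := by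
      rw [Algebra.algebraMap_eq_smul_one, Matrix.smul_mulVec, Matrix.one_mulVec]
    rw [h2] at h1
    have h4 : (μ • v) p - (J.map Complex.ofReal *ᵥ v) p = 0 := by
      simpa using h1
    have h5 : (μ • v) p = μ * v p := rfl
    rw [h5] at h4
    linear_combination -h4
  have hrc : ∀ p, ‖μ‖ * ‖v p‖
      ≤ (P *ᵥ fun q => ‖v q‖) p := by
    intro p
    rw [← norm_mul, ← heig p]
    calc ‖(J.map Complex.ofReal *ᵥ v) p‖
        ≤ ∑ q, ‖(J.map Complex.ofReal) p q * v q‖ := by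
          rw [Matrix.mulVec, dotProduct]
          exact norm_sum_le _ _
      _ = (P *ᵥ fun q => ‖v q‖) p := by
          refine Finset.sum_congr rfl fun q _ => ?_
          rw [norm_mul, Matrix.map_apply, Complex.norm_real, Real.norm_eq_abs, hJabs p q]
  obtain ⟨p0, hp0⟩ := Function.ne_iff.mp hvne
  exact eig_bound hn hP hw hPw (fun p => norm_nonneg _) hrc
    ⟨p0, norm_pos_iff.mpr hp0⟩


/-- Theorem 2.1: convergence of the synchronous relaxed nonstationary
multisplitting method for LCP with an H₊-matrix. -/
theorem sync_relaxed_nonstationary_multisplitting_converges {n m : ℕ}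
    (A : Matrix (Fin n) (Fin n) ℝ) (f xstar : Fin n → ℝ)
    (hA : IsHpMat A)
    (γ : ℝ)
    (hγ : γ = specRad ((Matrix.diagonal fun p => A p p)⁻¹ *
      (Matrix.diagonal (fun p => A p p) - A)))
    (ω : ℝ) (hω : 0 < ω ∧ ω < 2 / (1 + γ))
    (M N : Fin m → Matrix (Fin n) (Fin n) ℝ)
    (hsplit : ∀ i, A = M i - N i)
    (hcmp : ∀ i, ∀ p q, cmpMat A p q ≤ cmpMat (M i) p q - absMat (N i) p q)
    (E : Fin m → Matrix (Fin n) (Fin n) ℝ)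
    (hEdiag : ∀ i p q, p ≠ q → E i p q = 0)
    (hEnn : ∀ i p, 0 ≤ E i p p)
    (hEsum : ∑ i, E i = 1)
    (η : ℝ) (hη : η = γ / ∑ i, infNorm (E i))
    (st : ℕ) (hst : 0 < st)
    (hnorm : ∀ i, ∀ s, st ≤ s →
      infNorm (((cmpMat (M i))⁻¹ * absMat (N i)) ^ s) ≤ η)
    (hxstar : SolvesLCP A f xstar)
    (s : ℕ → Fin m → ℕ) (hs : ∀ k i, st ≤ s k i)
    (x : ℕ → Fin n → ℝ) (y : ℕ → Fin m → ℕ → Fin n → ℝ)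
    (hy0 : ∀ k i, y k i 0 = x k)
    (hy : ∀ k i j, 1 ≤ j → j ≤ s k i →
      SolvesLCP (M i) (fun p => f p + (N i *ᵥ y k i (j - 1)) p) (y k i j))
    (hx : ∀ k, x (k + 1) = ω • (∑ i, E i *ᵥ y k i (s k i)) + (1 - ω) • x k) :
    Filter.Tendsto x Filter.atTop (nhds xstar) := by
  rcases Nat.eq_zero_or_pos n with hn0 | hn
  · subst hn0
    haveI : IsEmpty (Fin 0) := by infer_instance
    have hxx : x = fun _ => xstar := funext fun k => Subsingleton.elim _ _
    rw [hxx]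
    exact tendsto_const_nhds
  haveI : Nonempty (Fin n) := Fin.pos_iff_nonempty.mp hn
  obtain ⟨p0⟩ := ‹Nonempty (Fin n)›
  rcases Nat.eq_zero_or_pos m with hm0 | hm
  · exfalso
    subst hm0
    have h0 := congrFun (congrFun hEsum p0) p0
    rw [Finset.univ_eq_empty, Finset.sum_empty] at h0
    have : (0 : Matrix (Fin n) (Fin n) ℝ) p0 p0 = (1 : Matrix (Fin n) (Fin n) ℝ) p0 p0 := h0
    rw [Matrix.zero_apply, Matrix.one_apply_eq] at this
    exact zero_ne_one this
  obtain ⟨⟨hoffA, huA, hinvA⟩, hdA⟩ := hA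
  obtain ⟨w, hw, hBw⟩ := mmat_vec hn huA hinvA
  have hBw1 : ∀ p, (cmpMat A *ᵥ w) p = 1 := fun p => congrFun hBw p
  -- gamma facts
  have hγ0 : 0 ≤ γ := by
    rw [hγ]
    exact Real.sSup_nonneg (by rintro r ⟨μ, -, rfl⟩; exact norm_nonneg μ)
  have hγ1 : γ < 1 := by
    rw [hγ]
    exact specRad_jacobi_lt_one hn ⟨⟨hoffA, huA, hinvA⟩, hdA⟩
  -- M i comparison matrices are M-matrices
  have hcmpMw : ∀ i p, 1 ≤ (cmpMat (M i) *ᵥ w) p := by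
    intro i p
    have h1 : ∑ q, (cmpMat A p q + absMat (N i) p q) * w q ≤ ∑ q, cmpMat (M i) p q * w q :=
      Finset.sum_le_sum fun q _ =>
        mul_le_mul_of_nonneg_right (by linarith [hcmp i p q]) (hw q).le
    have h2 : ∑ q, (cmpMat A p q + absMat (N i) p q) * w q
        = (cmpMat A *ᵥ w) p + (absMat (N i) *ᵥ w) p := by
      rw [Matrix.mulVec, Matrix.mulVec, dotProduct, dotProduct,
        ← Finset.sum_add_distrib]
      exact Finset.sum_congr rfl fun q _ => by ring
    have h3 : 0 ≤ (absMat (N i) *ᵥ w) p := by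
      rw [Matrix.mulVec, dotProduct]
      exact Finset.sum_nonneg fun q _ => mul_nonneg (abs_nonneg _) (hw q).le
    have h4 : (cmpMat (M i) *ᵥ w) p = ∑ q, cmpMat (M i) p q * w q := rfl
    rw [h4]
    rw [h2] at h1
    rw [hBw1 p] at h1
    linarith
  have hoffM : ∀ i, ∀ p q, p ≠ q → cmpMat (M i) p q ≤ 0 := by
    intro i p q h
    simp only [cmpMat, Matrix.of_apply, if_neg h]
    exact neg_nonpos.mpr (abs_nonneg _)
  have hMmat : ∀ i, IsUnit (cmpMat (M i)).det ∧ ∀ p q, 0 ≤ (cmpMat (M i))⁻¹ p q := by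
    intro i
    exact mmat_criterion hn (hoffM i) hw
      (fun p => lt_of_lt_of_le one_pos (hcmpMw i p))
      (fun {P} hP {θ} hPw {c} hc {r} hrc hne => eig_bound hn hP hw hPw hc hrc hne)
  -- diagonal entries of M i are positive
  have hdM : ∀ i p, 0 < M i p p := by
    intro i p
    have hc1 : cmpMat A p p = |A p p| := by simp [cmpMat]
    have hc2 : cmpMat (M i) p p = |M i p p| := by simp [cmpMat]
    have hc3 : absMat (N i) p p = |N i p p| := rfl
    have h1 := hcmp i p p
    rw [hc1, hc2, hc3] at h1
    have h2 : M i p p = A p p + N i p p := by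
      have hh := congrFun (congrFun (hsplit i) p) p
      rw [Matrix.sub_apply] at hh
      linarith
    by_contra h
    push_neg at h
    have h3 : |M i p p| = -(M i p p) := abs_of_nonpos h
    have h4 : |A p p| = A p p := abs_of_pos (hdA p)
    have h5 : -|N i p p| ≤ N i p p := neg_abs_le _
    linarith [hdA p]
  -- x* solves LCP(M i, f + N i x*)
  have hsubv : ∀ i (v : Fin n → ℝ) p, (A *ᵥ v) p = (M i *ᵥ v) p - (N i *ᵥ v) p := by
    intro i v p
    rw [hsplit i, Matrix.sub_mulVec]
    rfl
  have hxstarM : ∀ i, SolvesLCP (M i) (fun p => f p + (N i *ᵥ xstar) p) xstar := by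
    intro i
    obtain ⟨h0, h1, h2⟩ := hxstar
    refine ⟨h0, ?_, ?_⟩
    · intro p
      show f p + (N i *ᵥ xstar) p ≤ (M i *ᵥ xstar) p
      have := h1 p
      rw [hsubv i xstar p] at this
      linarith
    · rw [← h2]
      refine Finset.sum_congr rfl fun p _ => ?_
      show xstar p * ((M i *ᵥ xstar) p - (f p + (N i *ᵥ xstar) p))
          = xstar p * ((A *ᵥ xstar) p - f p)
      rw [hsubv i xstar p]
      ring
  -- error propagation chain
  have hchain : ∀ k i j, j ≤ s k i → ∀ p,
      |y k i j p - xstar p|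
        ≤ ((((cmpMat (M i))⁻¹ * absMat (N i)) ^ j) *ᵥ fun q => |x k q - xstar q|) p := by
    intro k i j
    induction j with
    | zero =>
        intro _ p
        rw [hy0 k i, pow_zero, Matrix.one_mulVec]
    | succ j ih =>
        intro hj p
        have hj' : j ≤ s k i := le_trans (Nat.le_succ j) hj
        have hsol := hy k i (j+1) (Nat.succ_le_succ (Nat.zero_le j)) hj
        rw [Nat.add_sub_cancel] at hsol
        have hcompare := lcp_compare (hdM i) hsol (hxstarM i)
        have hT : ∀ p q, 0 ≤ ((cmpMat (M i))⁻¹ * absMat (N i)) p q := by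
          intro p q
          rw [Matrix.mul_apply]
          exact Finset.sum_nonneg fun r _ => mul_nonneg ((hMmat i).2 p r) (abs_nonneg _)
        have h1 : ∀ p, (cmpMat (M i) *ᵥ fun q => |y k i (j+1) q - xstar q|) p
            ≤ (absMat (N i) *ᵥ fun q => |y k i j q - xstar q|) p := by
          intro p
          refine (hcompare p).trans ?_
          have he : (f p + (N i *ᵥ y k i j) p) - (f p + (N i *ᵥ xstar) p)
              = ∑ q, N i p q * (y k i j q - xstar q) := by
            rw [add_sub_add_left_eq_sub, Matrix.mulVec, Matrix.mulVec, dotProduct,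
              dotProduct, ← Finset.sum_sub_distrib]
            exact Finset.sum_congr rfl fun q _ => by ring
          rw [he]
          calc |∑ q, N i p q * (y k i j q - xstar q)|
              ≤ ∑ q, |N i p q * (y k i j q - xstar q)| := Finset.abs_sum_le_sum_abs _ _
            _ = ∑ q, |N i p q| * |y k i j q - xstar q| := by
                exact Finset.sum_congr rfl fun q _ => abs_mul _ _
            _ = (absMat (N i) *ᵥ fun q => |y k i j q - xstar q|) p := rfl
        have h2 : ∀ p, |y k i (j+1) p - xstar p|
            ≤ (((cmpMat (M i))⁻¹ * absMat (N i)) *ᵥ fun q => |y k i j q - xstar q|) p := by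
          intro p
          have ha : |y k i (j+1) p - xstar p|
              = (((cmpMat (M i))⁻¹ * cmpMat (M i)) *ᵥ fun q => |y k i (j+1) q - xstar q|) p := by
            rw [Matrix.nonsing_inv_mul _ (hMmat i).1, Matrix.one_mulVec]
          rw [ha, ← Matrix.mulVec_mulVec]
          calc ((cmpMat (M i))⁻¹ *ᵥ (cmpMat (M i) *ᵥ fun q => |y k i (j+1) q - xstar q|)) p
              ≤ ((cmpMat (M i))⁻¹ *ᵥ (absMat (N i) *ᵥ fun q => |y k i j q - xstar q|)) p :=
                mulVec_mono ((hMmat i).2) h1 p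
            _ = (((cmpMat (M i))⁻¹ * absMat (N i)) *ᵥ fun q => |y k i j q - xstar q|) p := by
                rw [Matrix.mulVec_mulVec]
        refine (h2 p).trans ?_
        calc (((cmpMat (M i))⁻¹ * absMat (N i)) *ᵥ fun q => |y k i j q - xstar q|) p
            ≤ (((cmpMat (M i))⁻¹ * absMat (N i)) *ᵥ
                ((((cmpMat (M i))⁻¹ * absMat (N i)) ^ j) *ᵥ fun q => |x k q - xstar q|)) p :=
              mulVec_mono hT (ih hj') p
          _ = ((((cmpMat (M i))⁻¹ * absMat (N i)) ^ (j+1)) *ᵥ fun q => |x k q - xstar q|) p := by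
              rw [Matrix.mulVec_mulVec, ← pow_succ']
  -- norm machinery
  have hEd : ∀ i p, E i p p ≤ infNorm (E i) := by
    intro i p
    have h1 : E i p p ≤ ∑ q, |E i p q| := by
      calc E i p p = |E i p p| := (abs_of_nonneg (hEnn i p)).symm
        _ ≤ ∑ q, |E i p q| := Finset.single_le_sum
            (f := fun q => |E i p q|) (fun q _ => abs_nonneg _) (Finset.mem_univ p)
    refine h1.trans ?_
    rw [infNorm]
    exact le_ciSup (Finite.bddAbove_range fun r => ∑ j, |E i r j|) p
  have hsum1 : ∀ p, ∑ i, E i p p = 1 := by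
    intro p
    have h0 := congrFun (congrFun hEsum p) p
    rw [Matrix.sum_apply] at h0
    rw [h0, Matrix.one_apply_eq]
  have hS1 : 1 ≤ ∑ i, infNorm (E i) := by
    calc (1:ℝ) = ∑ i, E i p0 p0 := (hsum1 p0).symm
      _ ≤ ∑ i, infNorm (E i) := Finset.sum_le_sum fun i _ => hEd i p0
  have hη0 : 0 ≤ η := by rw [hη]; exact div_nonneg hγ0 (by linarith)
  have hηγ : η ≤ γ := by rw [hη]; exact div_le_self hγ0 hS1
  -- error norm
  set c : ℕ → ℝ := fun k => ⨆ p, |x k p - xstar p| with hcdef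
  have hcb : ∀ k p, |x k p - xstar p| ≤ c k := by
    intro k p
    rw [hcdef]
    exact le_ciSup (Finite.bddAbove_range fun r => |x k r - xstar r|) p
  have hc0 : ∀ k, 0 ≤ c k := fun k => le_trans (abs_nonneg _) (hcb k p0)
  set θ : ℝ := ω * γ + |1 - ω| with hθdef
  have h1γ : (0:ℝ) < 1 + γ := by linarith
  have hω2 : ω * (1 + γ) < 2 := (lt_div_iff₀ h1γ).mp hω.2
  have hθlt : θ < 1 := by
    rcases le_or_gt ω 1 with h | h
    · rw [hθdef, abs_of_nonneg (by linarith : (0:ℝ) ≤ 1 - ω)]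
      nlinarith [hω.1, hγ1]
    · rw [hθdef, abs_of_neg (by linarith : (1:ℝ) - ω < 0)]
      linarith
  have hθ0 : 0 ≤ θ := add_nonneg (mul_nonneg hω.1.le hγ0) (abs_nonneg _)
  -- the one-step estimate
  have hstep : ∀ k p, |x (k+1) p - xstar p| ≤ θ * c k := by
    intro k p
    have hyb : ∀ i, |y k i (s k i) p - xstar p| ≤ η * c k := by
      intro i
      refine (hchain k i (s k i) le_rfl p).trans ?_
      have hTp : ∀ p q, 0 ≤ (((cmpMat (M i))⁻¹ * absMat (N i)) ^ (s k i)) p q := by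
        intro p q
        apply pow_entries_nonneg
        intro p q
        rw [Matrix.mul_apply]
        exact Finset.sum_nonneg fun r _ => mul_nonneg ((hMmat i).2 p r) (abs_nonneg _)
      have h2 : ((((cmpMat (M i))⁻¹ * absMat (N i)) ^ (s k i)) *ᵥ fun q => |x k q - xstar q|) p
          ≤ ∑ q, (((cmpMat (M i))⁻¹ * absMat (N i)) ^ (s k i)) p q * c k := by
        have hv : ((((cmpMat (M i))⁻¹ * absMat (N i)) ^ (s k i)) *ᵥ fun q => |x k q - xstar q|) p
            = ∑ q, (((cmpMat (M i))⁻¹ * absMat (N i)) ^ (s k i)) p q * |x k q - xstar q| := rfl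
        rw [hv]
        exact Finset.sum_le_sum fun q _ =>
          mul_le_mul_of_nonneg_left (hcb k q) (hTp p q)
      have h3 : ∑ q, (((cmpMat (M i))⁻¹ * absMat (N i)) ^ (s k i)) p q * c k
          = (∑ q, (((cmpMat (M i))⁻¹ * absMat (N i)) ^ (s k i)) p q) * c k :=
        (Finset.sum_mul _ _ _).symm
      have h4 : ∑ q, (((cmpMat (M i))⁻¹ * absMat (N i)) ^ (s k i)) p q
          ≤ infNorm (((cmpMat (M i))⁻¹ * absMat (N i)) ^ (s k i)) := by
        have he : ∑ q, (((cmpMat (M i))⁻¹ * absMat (N i)) ^ (s k i)) p q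
            = ∑ q, |(((cmpMat (M i))⁻¹ * absMat (N i)) ^ (s k i)) p q| :=
          Finset.sum_congr rfl fun q _ => (abs_of_nonneg (hTp p q)).symm
        rw [he, infNorm]
        exact le_ciSup
          (Finite.bddAbove_range fun r => ∑ j, |(((cmpMat (M i))⁻¹ * absMat (N i)) ^ (s k i)) r j|) p
      have h5 := hnorm i (s k i) (hs k i)
      calc ((((cmpMat (M i))⁻¹ * absMat (N i)) ^ (s k i)) *ᵥ fun q => |x k q - xstar q|) p
          ≤ (∑ q, (((cmpMat (M i))⁻¹ * absMat (N i)) ^ (s k i)) p q) * c k := h2.trans h3.le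
        _ ≤ η * c k := mul_le_mul_of_nonneg_right (h4.trans h5) (hc0 k)
    -- expand the iteration
    have hEy : ∀ i (v : Fin n → ℝ), (E i *ᵥ v) p = E i p p * v p := by
      intro i v
      rw [Matrix.mulVec, dotProduct]
      rw [Finset.sum_eq_single p]
      · intro q _ hq
        rw [hEdiag i p q (fun h => hq h.symm), zero_mul]
      · intro h
        exact absurd (Finset.mem_univ p) h
    have hkey : x (k+1) p - xstar p
        = ω * (∑ i, E i p p * (y k i (s k i) p - xstar p)) + (1 - ω) * (x k p - xstar p) := by
      have hxp := congrFun (hx k) p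
      rw [Pi.add_apply, Pi.smul_apply, Pi.smul_apply, smul_eq_mul, smul_eq_mul,
        Finset.sum_apply] at hxp
      have hs1 : ∑ i, (E i *ᵥ y k i (s k i)) p = ∑ i, E i p p * y k i (s k i) p :=
        Finset.sum_congr rfl fun i _ => hEy i _
      rw [hs1] at hxp
      have hs2 : ∑ i, E i p p * (y k i (s k i) p - xstar p)
          = (∑ i, E i p p * y k i (s k i) p) - xstar p := by
        calc ∑ i, E i p p * (y k i (s k i) p - xstar p)
            = ∑ i, (E i p p * y k i (s k i) p - E i p p * xstar p) :=
              Finset.sum_congr rfl fun i _ => by ring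
          _ = (∑ i, E i p p * y k i (s k i) p) - (∑ i, E i p p) * xstar p := by
              rw [Finset.sum_sub_distrib, Finset.sum_mul]
          _ = (∑ i, E i p p * y k i (s k i) p) - xstar p := by rw [hsum1 p, one_mul]
      rw [hs2, hxp]
      ring
    have habs1 : |∑ i, E i p p * (y k i (s k i) p - xstar p)| ≤ η * c k := by
      calc |∑ i, E i p p * (y k i (s k i) p - xstar p)|
          ≤ ∑ i, |E i p p * (y k i (s k i) p - xstar p)| := Finset.abs_sum_le_sum_abs _ _
        _ = ∑ i, E i p p * |y k i (s k i) p - xstar p| := Finset.sum_congr rfl fun i _ => by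
            rw [abs_mul, abs_of_nonneg (hEnn i p)]
        _ ≤ ∑ i, E i p p * (η * c k) := Finset.sum_le_sum fun i _ =>
            mul_le_mul_of_nonneg_left (hyb i) (hEnn i p)
        _ = (∑ i, E i p p) * (η * c k) := (Finset.sum_mul _ _ _).symm
        _ = η * c k := by rw [hsum1 p, one_mul]
    calc |x (k+1) p - xstar p|
        ≤ ω * |∑ i, E i p p * (y k i (s k i) p - xstar p)| + |1 - ω| * |x k p - xstar p| := by
          rw [hkey]
          refine (abs_add_le _ _).trans ?_
          rw [abs_mul, abs_mul, abs_of_pos hω.1]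
      _ ≤ ω * (η * c k) + |1 - ω| * c k := by
          have := mul_le_mul_of_nonneg_left habs1 hω.1.le
          have h7 := mul_le_mul_of_nonneg_left (hcb k p) (abs_nonneg (1 - ω))
          linarith
      _ ≤ ω * (γ * c k) + |1 - ω| * c k := by
          have h8 : η * c k ≤ γ * c k := mul_le_mul_of_nonneg_right hηγ (hc0 k)
          nlinarith [hω.1]
      _ = θ * c k := by rw [hθdef]; ring
  have hck : ∀ k, c (k+1) ≤ θ * c k := by
    intro k
    have : c (k+1) = ⨆ p, |x (k+1) p - xstar p| := by rw [hcdef]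
    rw [this]
    exact ciSup_le fun p => hstep k p
  have hckk : ∀ k, c k ≤ θ ^ k * c 0 := by
    intro k
    induction k with
    | zero => rw [pow_zero, one_mul]
    | succ k ih =>
        calc c (k+1) ≤ θ * c k := hck k
          _ ≤ θ * (θ ^ k * c 0) := mul_le_mul_of_nonneg_left ih hθ0
          _ = θ ^ (k+1) * c 0 := by ring
  rw [tendsto_pi_nhds]
  intro p
  have hzero : Filter.Tendsto (fun k => x k p - xstar p) Filter.atTop (nhds 0) := by
    apply squeeze_zero_norm (fun k => (hcb k p).trans (hckk k))
    have := (tendsto_pow_atTop_nhds_zero_of_lt_one hθ0 hθlt).mul_const (c 0)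
    simpa using this
  have := hzero.add_const (xstar p)
  simpa using this
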